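/- (Type D_n.) Let 𝐣 ∈ J_{k,r}. For every subset S ⊆ supp⁺(𝐣), the partition 𝐣⁺(S) lies in J_{k,r} and π_r(𝐣⁺(S)) = π_r(𝐣); and for every subset S ⊆ supp⁻(𝐣), the partition 𝐣⁻(S) lies in J_{k,r} and π_r(𝐣⁻(S)) = π_r(𝐣). -/

import Mathlib

noncomputable section

/-- The ℓ-weight lattice `P_q`, realized concretely as the additive group of
finitely supported functions on pairs (node index, spectral parameter);
the fundamental ℓ-weight `ω_{j,a}` corresponds to the indicator of `(j,a)`. -/
abbrev Pq : Type := (ℤ × ℂ) →₀ ℤ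

/-- The fundamental ℓ-weight `ω_{j,a}` (in additive notation), with the
convention `ω_{j,a} = 0` (the identity element) unless `1 ≤ j ≤ n`. -/
def lomega (n : ℕ) (j : ℤ) (a : ℂ) : Pq :=
  if 1 ≤ j ∧ j ≤ (n : ℤ) then Finsupp.single (j, a) 1 else 0

/-- The (1-based) position function of a partition represented by its finite
support `S ⊆ ℤ`: `ι_S(j_s) = s`. -/
def iotaF (S : Finset ℤ) (x : ℤ) : ℕ := (S.filter (fun y => y ≤ x)).card

/-- Type `D_n`: `π_r(j,s) = ω_{j, q^{i+j-2s-2r}}^{-1} · ω_{j, q^{2n-2-i-j+2s}}`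
(additively). -/
def piD1 (n i r : ℕ) (q : ℂ) (j s : ℤ) : Pq :=
  -lomega n j (q ^ ((i : ℤ) + j - 2 * s - 2 * (r : ℤ))) +
    lomega n j (q ^ (2 * (n : ℤ) - 2 - (i : ℤ) - j + 2 * s))

/-- Type `D_n`: `π_r(𝐣)` for a partition `𝐣 ∈ J_{k,r}` represented by its
underlying `k`-element set `S` (`k = S.card`): if `j_k < n-1` it is
`ω_{r, q^{r-i}} ∏_{s=1}^{k} π_r(j_s-1, s-1) π_r(j_s, s)^{-1}`, and if `j_k = n-1`
there is the extra factor `(ω_{n, q^{n+i-2r-2k-1}}^{-1} ω_{n, q^{n-i+2k-1}})^{-1}`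
(additive notation). -/
def piD (n i r : ℕ) (q : ℂ) (S : Finset ℤ) : Pq :=
  lomega n (r : ℤ) (q ^ ((r : ℤ) - (i : ℤ))) +
    ∑ x ∈ S, (piD1 n i r q (x - 1) ((iotaF S x : ℤ) - 1) -
      piD1 n i r q x (iotaF S x)) +
    (if ((n : ℤ) - 1) ∈ S then
      lomega n (n : ℤ) (q ^ ((n : ℤ) + (i : ℤ) - 2 * (r : ℤ) - 2 * (S.card : ℤ) - 1)) -
        lomega n (n : ℤ) (q ^ ((n : ℤ) - (i : ℤ) + 2 * (S.card : ℤ) - 1))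
     else 0)

/-- Type `D_n`: `π_r(𝐣,+) = ω_{n, q^{n-i+2k-1}} ω_{n, q^{n+i-2r-2k-1}}^{-1}`
(additively). -/
def piDplus (n i r k : ℕ) (q : ℂ) : Pq :=
  lomega n (n : ℤ) (q ^ ((n : ℤ) - (i : ℤ) + 2 * (k : ℤ) - 1)) -
    lomega n (n : ℤ) (q ^ ((n : ℤ) + (i : ℤ) - 2 * (r : ℤ) - 2 * (k : ℤ) - 1))

/-- Type `D_n`: `π_r(𝐣,-) = ω_{n-1, q^{n-i+2k-1}} ω_{n-1, q^{n+i-2r-2k-1}}^{-1}`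
(additively). -/
def piDminus (n i r k : ℕ) (q : ℂ) : Pq :=
  lomega n ((n : ℤ) - 1) (q ^ ((n : ℤ) - (i : ℤ) + 2 * (k : ℤ) - 1)) -
    lomega n ((n : ℤ) - 1) (q ^ ((n : ℤ) + (i : ℤ) - 2 * (r : ℤ) - 2 * (k : ℤ) - 1))

/-- Membership in `J_{k,r}` (type `D_n`): `S` is the underlying `k`-element set
of a strictly increasing sequence `r < j_1 < ⋯ < j_k ≤ n-1`. -/
def memJD (n r k : ℕ) (S : Finset ℤ) : Prop :=
  S.card = k ∧ ∀ x ∈ S, (r : ℤ) < x ∧ x ≤ (n : ℤ) - 1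

/-- `σ⁺_S(j)`: the largest `j' ∈ S` with `j' ≥ j` such that `j'' - j < 2(ι(j'') - ι(j))`
for all `j'' ∈ S` with `j < j'' ≤ j'`. -/
def sigmaP (S : Finset ℤ) (j : ℤ) : ℤ :=
  WithBot.unbotD j (Finset.max (S.filter (fun j' => j ≤ j' ∧
    ∀ j'' ∈ S, j < j'' → j'' ≤ j' →
      j'' - j < 2 * ((iotaF S j'' : ℤ) - (iotaF S j : ℤ)))))

/-- `σ⁻_S(j)`: the smallest `j' ∈ S` with `j' ≤ j` such that `j - j'' < 2(ι(j) - ι(j''))`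
for all `j'' ∈ S` with `j' ≤ j'' < j`. -/
def sigmaM (S : Finset ℤ) (j : ℤ) : ℤ :=
  WithTop.untopD j (Finset.min (S.filter (fun j' => j' ≤ j ∧
    ∀ j'' ∈ S, j' ≤ j'' → j'' < j →
      j - j'' < 2 * ((iotaF S j : ℤ) - (iotaF S j'' : ℤ)))))

/-- `τ⁺_S(j) = j + 2(ι(σ⁺(j)) - ι(j)) + 1`. -/
def tauP (S : Finset ℤ) (j : ℤ) : ℤ :=
  j + 2 * ((iotaF S (sigmaP S j) : ℤ) - (iotaF S j : ℤ)) + 1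

/-- `τ⁻_S(j) = j + 2(ι(σ⁻(j)) - ι(j)) - 1`. -/
def tauM (S : Finset ℤ) (j : ℤ) : ℤ :=
  j + 2 * ((iotaF S (sigmaM S j) : ℤ) - (iotaF S j : ℤ)) - 1

/-- The set of integers between `a` and `b` inclusive, regardless of order. -/
def itv (a b : ℤ) : Finset ℤ := Finset.Icc (min a b) (max a b)

/-- The symmetric difference `(S \ T) ∪ (T \ S)`. -/
def symmd (S T : Finset ℤ) : Finset ℤ := (S \ T) ∪ (T \ S)

/-- `supp_m(S) = { j ∈ S : 2 ι_S(j) = j - m }`. -/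
def suppm (m : ℤ) (S : Finset ℤ) : Finset ℤ :=
  S.filter (fun j => 2 * (iotaF S j : ℤ) = j - m)

/-- `𝐣⁺(j) = 𝐣_{[j, τ⁺(j)]}`. -/
def opP (S : Finset ℤ) (j : ℤ) : Finset ℤ := symmd S (itv j (tauP S j))

/-- `𝐣⁻(j) = 𝐣_{[j, τ⁻(j)]}`. -/
def opM (S : Finset ℤ) (j : ℤ) : Finset ℤ := symmd S (itv j (tauM S j))

/-- Successive application of the operation `f` at each element of the finite
set `T` (elements processed in increasing order; by the disjointness of the
relevant intervals the result does not depend on the order). -/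
def applyAll (f : Finset ℤ → ℤ → Finset ℤ) (S T : Finset ℤ) : Finset ℤ :=
  if h : T.Nonempty then applyAll f (f S (T.min' h)) (T.erase (T.min' h)) else S
termination_by T.card
decreasing_by exact Finset.card_erase_lt_of_mem (T.min'_mem h)

section Aux
open Finset

lemma iotaF_mono (S : Finset ℤ) {x y : ℤ} (h : x ≤ y) : iotaF S x ≤ iotaF S y := by
  unfold iotaF
  apply Finset.card_le_card
  intro z hz
  simp only [Finset.mem_filter] at hz ⊢
  exact ⟨hz.1, hz.2.trans h⟩

lemma iotaF_mem (S : Finset ℤ) {x : ℤ} (hx : x ∈ S) :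
    iotaF S x = iotaF S (x - 1) + 1 := by
  unfold iotaF
  have h : S.filter (fun y => y ≤ x) = insert x (S.filter (fun y => y ≤ x - 1)) := by
    ext y
    simp only [Finset.mem_filter, Finset.mem_insert]
    constructor
    · rintro ⟨hyS, hyx⟩
      rcases eq_or_ne y x with h | h
      · exact Or.inl h
      · exact Or.inr ⟨hyS, by omega⟩
    · rintro (rfl | ⟨hyS, hyx⟩)
      · exact ⟨hx, le_refl _⟩
      · exact ⟨hyS, by omega⟩
  rw [h, Finset.card_insert_of_notMem]
  simp only [Finset.mem_filter, not_and]
  intro _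
  omega

lemma iotaF_lt (S : Finset ℤ) {x y : ℤ} (hx : x ∈ S) (h : y < x) :
    iotaF S y + 1 ≤ iotaF S x := by
  have h1 : iotaF S (x - 1) + 1 ≤ iotaF S x := (iotaF_mem S hx).ge
  have h2 : iotaF S y ≤ iotaF S (x - 1) := iotaF_mono S (by omega)
  omega

lemma iotaF_le_card (S : Finset ℤ) (x : ℤ) : iotaF S x ≤ S.card :=
  Finset.card_le_card (Finset.filter_subset _ _)

lemma iotaF_pos (S : Finset ℤ) {x : ℤ} (hx : x ∈ S) : 1 ≤ iotaF S x := by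
  have := iotaF_mem S hx
  omega

lemma iotaF_add (S : Finset ℤ) {a b : ℤ} (h : a ≤ b + 1) :
    iotaF S b = iotaF S (a - 1) + (S ∩ Finset.Icc a b).card := by
  unfold iotaF
  rw [← Finset.card_union_of_disjoint]
  · congr 1
    ext y
    simp only [Finset.mem_filter, Finset.mem_union, Finset.mem_inter, Finset.mem_Icc]
    constructor
    · rintro ⟨hyS, hy⟩
      by_cases hc : y ≤ a - 1
      · exact Or.inl ⟨hyS, hc⟩
      · exact Or.inr ⟨hyS, by omega, hy⟩
    · rintro (⟨hyS, hy⟩ | ⟨hyS, hy1, hy2⟩)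
      · exact ⟨hyS, by omega⟩
      · exact ⟨hyS, by omega⟩
  · rw [Finset.disjoint_left]
    intro y hy1 hy2
    simp only [Finset.mem_filter, Finset.mem_inter, Finset.mem_Icc] at hy1 hy2
    omega

lemma mem_symmd {S T : Finset ℤ} {x : ℤ} :
    x ∈ symmd S T ↔ ((x ∈ S ∧ x ∉ T) ∨ (x ∈ T ∧ x ∉ S)) := by
  simp [symmd, Finset.mem_union, Finset.mem_sdiff]

-- agreement below the interval
lemma iotaF_symmd_lt (S : Finset ℤ) {l t x : ℤ} (h : x ≤ l - 1) :
    iotaF (symmd S (Finset.Icc l t)) x = iotaF S x := by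
  unfold iotaF
  congr 1
  ext y
  simp only [Finset.mem_filter, mem_symmd, Finset.mem_Icc]
  by_cases hy : y ∈ S <;> simp [hy] <;> omega

lemma card_symmd_inter_in (S : Finset ℤ) {l t x : ℤ} (hlx : l ≤ x) (hxt : x ≤ t) :
    ((symmd S (Finset.Icc l t) ∩ Finset.Icc l x).card : ℤ)
      + (S ∩ Finset.Icc l x).card = x - l + 1 := by
  have hset : symmd S (Finset.Icc l t) ∩ Finset.Icc l x
      = Finset.Icc l x \ (S ∩ Finset.Icc l x) := by
    ext y
    simp only [Finset.mem_inter, Finset.mem_sdiff, Finset.mem_Icc, mem_symmd]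
    by_cases hy : y ∈ S <;> simp [hy] <;> omega
  rw [hset, Finset.card_sdiff_of_subset (Finset.inter_subset_right)]
  have hsub : (S ∩ Finset.Icc l x).card ≤ (Finset.Icc l x).card :=
    Finset.card_le_card Finset.inter_subset_right
  have hcard : (Finset.Icc l x).card = (x + 1 - l).toNat := Int.card_Icc l x
  omega

lemma iotaF_symmd_in (S : Finset ℤ) {l t x : ℤ} (hlx : l ≤ x) (hxt : x ≤ t) :
    (iotaF (symmd S (Finset.Icc l t)) x : ℤ) + iotaF S x
      = 2 * (iotaF S (l - 1) : ℤ) + (x - l + 1) := by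
  have h1 := iotaF_add (symmd S (Finset.Icc l t)) (a := l) (b := x) (by omega)
  have h2 := iotaF_add S (a := l) (b := x) (by omega)
  have h3 := iotaF_symmd_lt S (l := l) (t := t) (x := l - 1) (by omega)
  have h4 := card_symmd_inter_in S hlx hxt
  omega

lemma iotaF_symmd_ge (S : Finset ℤ) {l x : ℤ} {m : ℕ}
    (hcard : (S ∩ Finset.Icc l (l + 2 * m + 1)).card = m + 1)
    (h : l + 2 * m + 1 ≤ x) :
    iotaF (symmd S (Finset.Icc l (l + 2 * m + 1))) x = iotaF S x := by
  set t : ℤ := l + 2 * m + 1 with ht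
  have h1 := iotaF_add (symmd S (Finset.Icc l t)) (a := t + 1) (b := x) (by omega)
  have h2 := iotaF_add S (a := t + 1) (b := x) (by omega)
  have h3 : symmd S (Finset.Icc l t) ∩ Finset.Icc (t + 1) x = S ∩ Finset.Icc (t + 1) x := by
    ext y
    simp only [Finset.mem_inter, mem_symmd, Finset.mem_Icc]
    by_cases hy : y ∈ S <;> simp [hy] <;> omega
  have h4 := iotaF_symmd_in S (l := l) (t := t) (x := t) (by omega) le_rfl
  have h5 := iotaF_add S (a := l) (b := t) (by omega)
  have h6 := iotaF_symmd_lt S (l := l) (t := t) (x := l - 1) (by omega)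
  rw [h3] at h1
  rw [show t + 1 - 1 = t by ring] at h1 h2
  -- iotaF S' t = iotaF S t
  have : (iotaF (symmd S (Finset.Icc l t)) t : ℤ) = iotaF S t := by omega
  omega

lemma card_symmd (S : Finset ℤ) {l : ℤ} {m : ℕ}
    (hcard : (S ∩ Finset.Icc l (l + 2 * m + 1)).card = m + 1) :
    (symmd S (Finset.Icc l (l + 2 * m + 1))).card = S.card := by
  set t : ℤ := l + 2 * m + 1 with ht
  have hd : Disjoint (S \ Finset.Icc l t) (Finset.Icc l t \ S) := by
    rw [Finset.disjoint_left]
    intro y hy1 hy2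
    simp only [Finset.mem_sdiff] at hy1 hy2
    exact hy2.2 hy1.1
  have h1 : (S ∩ Finset.Icc l t).card + (S \ Finset.Icc l t).card = S.card :=
    Finset.card_inter_add_card_sdiff S (Finset.Icc l t)
  have h2 : (Finset.Icc l t ∩ S).card + (Finset.Icc l t \ S).card = (Finset.Icc l t).card :=
    Finset.card_inter_add_card_sdiff _ S
  have h3 : (Finset.Icc l t ∩ S) = (S ∩ Finset.Icc l t) := Finset.inter_comm _ _
  have h4 : (Finset.Icc l t).card = (t + 1 - l).toNat := Int.card_Icc l t
  have h5 : (symmd S (Finset.Icc l t)).card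
      = (S \ Finset.Icc l t).card + (Finset.Icc l t \ S).card := by
    unfold symmd
    exact Finset.card_union_of_disjoint hd
  rw [h3] at h2
  omega

end Aux
section Core
open Finset

lemma piD1_zero (n i r : ℕ) (q : ℂ) {N x s : ℤ} (hN : N = (n : ℤ) - i + r - 2)
    (h : x - 2 * s = N + 1) : piD1 n i r q x s = 0 := by
  unfold piD1
  have he : (i : ℤ) + x - 2 * s - 2 * r = 2 * (n : ℤ) - 2 - i - x + 2 * s := by omega
  rw [he]
  exact neg_add_cancel _

lemma piD1_reflect (n i r : ℕ) (q : ℂ) {N x s s' : ℤ} (hN : N = (n : ℤ) - i + r - 2)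
    (h : (x - 2 * s) + (x - 2 * s') = 2 * N + 2) :
    piD1 n i r q x s' = -piD1 n i r q x s := by
  unfold piD1
  have e1 : (i : ℤ) + x - 2 * s' - 2 * r = 2 * (n : ℤ) - 2 - i - x + 2 * s := by omega
  have e2 : 2 * (n : ℤ) - 2 - i - x + 2 * s' = (i : ℤ) + x - 2 * s - 2 * r := by omega
  rw [e1, e2]
  abel

lemma telescope (f : ℤ → Pq) (l : ℤ) (c : ℕ) :
    ∑ x ∈ Finset.Icc l (l + c), (f (x - 1) - f x) = f (l - 1) - f (l + c) := by
  induction c with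
  | zero =>
    simp
  | succ c ih =>
    have hins : Finset.Icc l (l + (c + 1 : ℕ)) = insert (l + c + 1) (Finset.Icc l (l + c)) := by
      ext y
      simp only [Finset.mem_Icc, Finset.mem_insert]
      push_cast
      omega
    rw [hins, Finset.sum_insert (by simp only [Finset.mem_Icc]; omega), ih]
    push_cast
    rw [show l + ((c : ℤ) + 1) = l + c + 1 by ring, show l + (c : ℤ) + 1 - 1 = l + c by ring]
    abel

end Core
section CoreSum
open Finset

lemma core_sum (n i r : ℕ) (q : ℂ) (N l : ℤ) (m : ℕ) (S : Finset ℤ)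
    (hN : N = (n : ℤ) - i + r - 2)
    (hl : (l - 1) - 2 * (iotaF S (l - 1) : ℤ) = N + 1)
    (hcard : (S ∩ Finset.Icc l (l + 2 * m + 1)).card = m + 1) :
    ∑ x ∈ symmd S (Finset.Icc l (l + 2 * m + 1)),
      (piD1 n i r q (x - 1) ((iotaF (symmd S (Finset.Icc l (l + 2 * m + 1))) x : ℤ) - 1)
        - piD1 n i r q x (iotaF (symmd S (Finset.Icc l (l + 2 * m + 1))) x))
      = ∑ x ∈ S, (piD1 n i r q (x - 1) ((iotaF S x : ℤ) - 1)
          - piD1 n i r q x (iotaF S x)) := by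
  set t : ℤ := l + 2 * m + 1 with ht
  set I : Finset ℤ := Finset.Icc l t with hI
  set S' : Finset ℤ := symmd S I with hS'
  set g : Finset ℤ → ℤ → Pq := fun T x => piD1 n i r q x (iotaF T x) with hg
  have hcc : (S ∩ Finset.Icc l t).card = m + 1 := hcard
  -- bridge both sums to differences of g
  have bridge : ∀ T : Finset ℤ,
      ∑ x ∈ T, (piD1 n i r q (x - 1) ((iotaF T x : ℤ) - 1) - piD1 n i r q x (iotaF T x))
        = ∑ x ∈ T, (g T (x - 1) - g T x) := by
    intro T
    apply Finset.sum_congr rfl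
    intro x hx
    have h1 := iotaF_mem T hx
    have h2 : ((iotaF T x : ℤ) - 1) = ((iotaF T (x - 1) : ℤ)) := by
      push_cast; omega
    rw [h2]
  rw [bridge S, bridge S']
  -- basic iota facts
  have hlt1 : iotaF S' (l - 1) = iotaF S (l - 1) := iotaF_symmd_lt S (le_refl _)
  have hst : iotaF S t = iotaF S (l - 1) + (m + 1) := by
    have h0 := iotaF_add S (a := l) (b := t) (by omega)
    omega
  have hzl : g S (l - 1) = 0 := piD1_zero n i r q hN (by omega)
  have hzl' : g S' (l - 1) = 0 := by
    simp only [hg, hlt1]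
    exact piD1_zero n i r q hN (by omega)
  have hzt : g S t = 0 := piD1_zero n i r q hN (by omega)
  -- negation on the interval
  have hneg : ∀ x, l ≤ x → x ≤ t → g S' x = -g S x := by
    intro x h1 h2
    have h3 : (iotaF S' x : ℤ) + iotaF S x = 2 * (iotaF S (l - 1) : ℤ) + (x - l + 1) :=
      iotaF_symmd_in S h1 h2
    exact piD1_reflect n i r q hN (by omega)
  have hterm : ∀ x, l ≤ x → x ≤ t → g S' (x - 1) - g S' x = -(g S (x - 1) - g S x) := by
    intro x h1 h2
    by_cases hc : x = l
    · subst hc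
      rw [hzl, hzl', hneg x h1 h2]; abel
    · rw [hneg x h1 h2, hneg (x - 1) (by omega) (by omega)]; abel
  -- agreement outside the interval
  have hgeq : ∀ y, (y ≤ l - 1 ∨ t ≤ y) → g S' y = g S y := by
    intro y hy
    have h4 : iotaF S' y = iotaF S y := by
      rcases hy with hy | hy
      · exact iotaF_symmd_lt S hy
      · exact iotaF_symmd_ge S hcc hy
    simp only [hg, h4]
  have hgout : ∀ x, (x < l ∨ t < x) → g S' (x - 1) - g S' x = g S (x - 1) - g S x := by
    intro x hx
    rw [hgeq x (by omega), hgeq (x - 1) (by omega)]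
  -- set identities
  have hdiff : S' \ I = S \ I := by
    ext y
    simp only [Finset.mem_sdiff, hS', mem_symmd]
    by_cases hy : y ∈ I <;> simp [hy] <;> tauto
  have hintr : S' ∩ I = I \ S := by
    ext y
    simp only [Finset.mem_inter, Finset.mem_sdiff, hS', mem_symmd]
    by_cases hy : y ∈ I <;> simp [hy] <;> tauto
  -- telescoping over I
  have htel : ∑ x ∈ I, (g S (x - 1) - g S x) = 0 := by
    have h2 : I = Finset.Icc l (l + ((2 * m + 1 : ℕ) : ℤ)) := by
      rw [hI, ht]
      congr 1
      push_cast
      ring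
    rw [h2, telescope (g S) l (2 * m + 1),
      show l + ((2 * m + 1 : ℕ) : ℤ) = t by rw [ht]; push_cast; ring, hzl, hzt, sub_zero]
  have hsplitI : ∑ x ∈ I ∩ S, (g S (x - 1) - g S x) + ∑ x ∈ I \ S, (g S (x - 1) - g S x)
      = 0 := by rw [Finset.sum_inter_add_sum_sdiff, htel]
  have h9 : ∑ x ∈ I \ S, (g S (x - 1) - g S x)
      = -∑ x ∈ I ∩ S, (g S (x - 1) - g S x) :=
    eq_neg_of_add_eq_zero_right hsplitI
  -- main computation
  calc ∑ x ∈ S', (g S' (x - 1) - g S' x)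
      = ∑ x ∈ S' ∩ I, (g S' (x - 1) - g S' x) + ∑ x ∈ S' \ I, (g S' (x - 1) - g S' x) :=
        (Finset.sum_inter_add_sum_sdiff S' I _).symm
    _ = ∑ x ∈ I \ S, (-(g S (x - 1) - g S x)) + ∑ x ∈ S \ I, (g S (x - 1) - g S x) := by
        rw [hdiff, hintr]
        congr 1
        · apply Finset.sum_congr rfl
          intro x hx
          simp only [Finset.mem_sdiff, hI, Finset.mem_Icc] at hx
          exact hterm x hx.1.1 hx.1.2
        · apply Finset.sum_congr rfl
          intro x hx
          simp only [Finset.mem_sdiff, hI, Finset.mem_Icc] at hx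
          exact hgout x (by omega)
    _ = ∑ x ∈ I ∩ S, (g S (x - 1) - g S x) + ∑ x ∈ S \ I, (g S (x - 1) - g S x) := by
        rw [Finset.sum_neg_distrib, h9, neg_neg]
    _ = ∑ x ∈ S ∩ I, (g S (x - 1) - g S x) + ∑ x ∈ S \ I, (g S (x - 1) - g S x) := by
        rw [Finset.inter_comm I S]
    _ = ∑ x ∈ S, (g S (x - 1) - g S x) := Finset.sum_inter_add_sum_sdiff S I _

end CoreSum
section Step
open Finset

lemma max_unbot'_mem {P : Finset ℤ} {j : ℤ} (hj : j ∈ P) :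
    WithBot.unbotD j P.max ∈ P ∧ ∀ x ∈ P, x ≤ WithBot.unbotD j P.max := by
  have hne : P.Nonempty := ⟨j, hj⟩
  rw [← Finset.coe_max' hne]
  exact ⟨P.max'_mem hne, fun x hx => P.le_max' x hx⟩

lemma min_untop'_mem {P : Finset ℤ} {j : ℤ} (hj : j ∈ P) :
    WithTop.untopD j P.min ∈ P ∧ ∀ x ∈ P, WithTop.untopD j P.min ≤ x := by
  have hne : P.Nonempty := ⟨j, hj⟩
  rw [← Finset.coe_min' hne]
  exact ⟨P.min'_mem hne, fun x hx => P.min'_le x hx⟩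

set_option maxHeartbeats 2000000 in
lemma stepP (n i r k : ℕ) (N : ℤ) (q : ℂ)
    (hin2 : i + 2 ≤ n) (hk2 : 2 * k + r ≤ i)
    (hN : N = (n : ℤ) - i + r - 2)
    (S : Finset ℤ) (hS : memJD n r k S) {j : ℤ} (hj : j ∈ suppm N S) :
    memJD n r k (opP S j) ∧ piD n i r q (opP S j) = piD n i r q S ∧
      ∀ j' ∈ suppm N S, j < j' → j' ∈ suppm N (opP S j) := by
  have hjmem := Finset.mem_filter.mp hj
  have hjS : j ∈ S := hjmem.1
  have hjι : 2 * (iotaF S j : ℤ) = j - N := hjmem.2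
  -- the filter defining σ⁺
  set P : Finset ℤ := S.filter (fun j' => j ≤ j' ∧
    ∀ j'' ∈ S, j < j'' → j'' ≤ j' →
      j'' - j < 2 * ((iotaF S j'' : ℤ) - (iotaF S j : ℤ))) with hP
  have hjP : j ∈ P := by
    rw [hP, Finset.mem_filter]
    exact ⟨hjS, le_refl j, fun j'' _ h1 h2 => by omega⟩
  have hσdef : sigmaP S j = WithBot.unbotD j P.max := rfl
  obtain ⟨hσP, hσmax⟩ := max_unbot'_mem hjP
  rw [← hσdef] at hσP hσmax
  set σ : ℤ := sigmaP S j with hσ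
  obtain ⟨hσS, hjσ, hσcond⟩ : σ ∈ S ∧ j ≤ σ ∧
      ∀ j'' ∈ S, j < j'' → j'' ≤ σ →
        j'' - j < 2 * ((iotaF S j'' : ℤ) - (iotaF S j : ℤ)) := by
    have := Finset.mem_filter.mp hσP
    exact ⟨this.1, this.2.1, this.2.2⟩
  set m : ℕ := iotaF S σ - iotaF S j with hmdef
  have hm : (m : ℤ) = (iotaF S σ : ℤ) - iotaF S j := by
    have := iotaF_mono S hjσ
    push_cast [hmdef]
    omega
  have hτ : tauP S j = j + 2 * (m : ℤ) + 1 := by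
    unfold tauP
    rw [← hσ]
    omega
  have hop : opP S j = symmd S (Finset.Icc j (j + 2 * (m : ℤ) + 1)) := by
    unfold opP itv
    rw [hτ, min_eq_left (by omega), max_eq_right (by omega)]
  have hσle : σ ≤ j + 2 * (m : ℤ) := by
    rcases eq_or_lt_of_le hjσ with heq | hlt
    · omega
    · have := hσcond σ hσS hlt (le_refl σ)
      omega
  have hnoelem : ∀ x ∈ S, σ < x → j + 2 * (m : ℤ) + 1 < x := by
    intro x hx hσx
    by_contra hcon
    push_neg at hcon
    have hxP : x ∈ P := by
      rw [hP, Finset.mem_filter]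
      refine ⟨hx, by omega, ?_⟩
      intro j'' hj'' h1 h2
      by_cases hc : j'' ≤ σ
      · exact hσcond j'' hj'' h1 hc
      · have h3 := iotaF_lt S hj'' (show σ < j'' by omega)
        have h4 := iotaF_mono S hjσ
        omega
    have := hσmax x hxP
    omega
  have hinter : S ∩ Finset.Icc j (j + 2 * (m : ℤ) + 1) = S ∩ Finset.Icc j σ := by
    ext y
    simp only [Finset.mem_inter, Finset.mem_Icc]
    constructor
    · rintro ⟨h1, h2, h3⟩
      refine ⟨h1, h2, ?_⟩
      by_contra hcon
      push_neg at hcon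
      have := hnoelem y h1 hcon
      omega
    · rintro ⟨h1, h2, h3⟩
      exact ⟨h1, h2, by omega⟩
  have hjm1 : iotaF S j = iotaF S (j - 1) + 1 := iotaF_mem S hjS
  have hcard : (S ∩ Finset.Icc j (j + 2 * (m : ℤ) + 1)).card = m + 1 := by
    rw [hinter]
    have h5 := iotaF_add S (a := j) (b := σ) (by omega)
    omega
  have hl : (j - 1) - 2 * (iotaF S (j - 1) : ℤ) = N + 1 := by omega
  have hcards := card_symmd S (l := j) hcard
  have hcore := core_sum n i r q N j m S hN hl hcard
  have hιk : iotaF S σ ≤ k := hS.1 ▸ iotaF_le_card S σ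
  have hτle : j + 2 * (m : ℤ) + 1 ≤ (n : ℤ) - 1 := by
    have h6 : (iotaF S σ : ℤ) ≤ (k : ℤ) := by exact_mod_cast hιk
    omega
  have hjr : (r : ℤ) < j ∧ j ≤ (n : ℤ) - 1 := hS.2 j hjS
  -- new set in J
  have hmemJ : memJD n r k (opP S j) := by
    constructor
    · rw [hop, hcards, hS.1]
    · intro x hx
      rw [hop] at hx
      rcases mem_symmd.mp hx with ⟨h1, _⟩ | ⟨h1, _⟩
      · exact hS.2 x h1
      · simp only [Finset.mem_Icc] at h1
        omega
  -- τ ∉ S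
  have hτnS : j + 2 * (m : ℤ) + 1 ∉ S := by
    intro hcon
    have : j + 2 * (m : ℤ) + 1 ∈ S ∩ Finset.Icc j σ := by
      rw [← hinter]
      simp only [Finset.mem_inter, Finset.mem_Icc]
      exact ⟨hcon, by omega, le_refl _⟩
    simp only [Finset.mem_inter, Finset.mem_Icc] at this
    omega
  -- invariance of piD
  have hpiD : piD n i r q (opP S j) = piD n i r q S := by
    have hif : (if ((n : ℤ) - 1) ∈ symmd S (Finset.Icc j (j + 2 * (m : ℤ) + 1)) then
        lomega n (n : ℤ) (q ^ ((n : ℤ) + (i : ℤ) - 2 * (r : ℤ)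
            - 2 * (((symmd S (Finset.Icc j (j + 2 * (m : ℤ) + 1))).card : ℤ)) - 1)) -
          lomega n (n : ℤ) (q ^ ((n : ℤ) - (i : ℤ)
            + 2 * (((symmd S (Finset.Icc j (j + 2 * (m : ℤ) + 1))).card : ℤ)) - 1))
       else 0)
        = (if ((n : ℤ) - 1) ∈ S then
        lomega n (n : ℤ) (q ^ ((n : ℤ) + (i : ℤ) - 2 * (r : ℤ) - 2 * ((S.card : ℤ)) - 1)) -
          lomega n (n : ℤ) (q ^ ((n : ℤ) - (i : ℤ) + 2 * ((S.card : ℤ)) - 1))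
       else 0) := by
      by_cases hc : ((n : ℤ) - 1) ∈ Finset.Icc j (j + 2 * (m : ℤ) + 1)
      · -- n - 1 = τ, boundary case
        simp only [Finset.mem_Icc] at hc
        have hceq : (n : ℤ) - 1 = j + 2 * (m : ℤ) + 1 := by omega
        have hnotS : ((n : ℤ) - 1) ∉ S := by rw [hceq]; exact hτnS
        have hinS' : ((n : ℤ) - 1) ∈ symmd S (Finset.Icc j (j + 2 * (m : ℤ) + 1)) := by
          rw [mem_symmd]
          exact Or.inr ⟨by simp only [Finset.mem_Icc]; omega, hnotS⟩
        have h2k : 2 * (k : ℤ) = (i : ℤ) - r := by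
          have h6 : (iotaF S σ : ℤ) ≤ (k : ℤ) := by exact_mod_cast hιk
          have hk2' : 2 * (k : ℤ) + r ≤ (i : ℤ) := by exact_mod_cast hk2
          omega
        rw [if_pos hinS', if_neg hnotS, hcards, hS.1]
        rw [show (n : ℤ) + i - 2 * r - 2 * (k : ℤ) - 1 = (n : ℤ) - i + 2 * (k : ℤ) - 1 by omega]
        exact sub_self _
      · have hmem : (((n : ℤ) - 1) ∈ symmd S (Finset.Icc j (j + 2 * (m : ℤ) + 1)))
            ↔ (((n : ℤ) - 1) ∈ S) := by
          rw [mem_symmd]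
          constructor
          · rintro (⟨h1, _⟩ | ⟨h1, _⟩)
            · exact h1
            · exact absurd h1 hc
          · intro h1
            exact Or.inl ⟨h1, hc⟩
        by_cases hm1 : ((n : ℤ) - 1) ∈ S
        · rw [if_pos (hmem.mpr hm1), if_pos hm1, hcards]
        · rw [if_neg (fun hcon => hm1 (hmem.mp hcon)), if_neg hm1]
    rw [hop]
    unfold piD
    rw [hcore, hif]
  refine ⟨hmemJ, hpiD, ?_⟩
  -- preservation of suppm for larger elements
  intro j' hj' hjj'
  have hj'mem := Finset.mem_filter.mp hj'
  have hj'S : j' ∈ S := hj'mem.1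
  have hj'ι : 2 * (iotaF S j' : ℤ) = j' - N := hj'mem.2
  have hτj' : j + 2 * (m : ℤ) + 1 < j' := by
    by_contra hcon
    push_neg at hcon
    by_cases hc : j' ≤ σ
    · have := hσcond j' hj'S hjj' hc
      omega
    · push_neg at hc
      have := hnoelem j' hj'S hc
      omega
  have hj'S' : j' ∈ opP S j := by
    rw [hop, mem_symmd]
    exact Or.inl ⟨hj'S, by simp only [Finset.mem_Icc]; omega⟩
  have hι' : iotaF (opP S j) j' = iotaF S j' := by
    rw [hop]
    exact iotaF_symmd_ge S hcard (by omega)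
  rw [suppm, Finset.mem_filter]
  exact ⟨hj'S', by rw [hι']; omega⟩

end Step
section StepM
open Finset

set_option maxHeartbeats 2000000 in
lemma stepM (n i r k : ℕ) (N : ℤ) (q : ℂ)
    (hin2 : i + 2 ≤ n) (hk2 : 2 * k + r ≤ i)
    (hN : N = (n : ℤ) - i + r - 2)
    (S : Finset ℤ) (hS : memJD n r k S) {j : ℤ} (hj : j ∈ suppm (N + 1) S) :
    memJD n r k (opM S j) ∧ piD n i r q (opM S j) = piD n i r q S ∧
      ∀ j' ∈ suppm (N + 1) S, j < j' → j' ∈ suppm (N + 1) (opM S j) := by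
  have hjmem := Finset.mem_filter.mp hj
  have hjS : j ∈ S := hjmem.1
  have hjι : 2 * (iotaF S j : ℤ) = j - (N + 1) := hjmem.2
  set P : Finset ℤ := S.filter (fun j' => j' ≤ j ∧
    ∀ j'' ∈ S, j' ≤ j'' → j'' < j →
      j - j'' < 2 * ((iotaF S j : ℤ) - (iotaF S j'' : ℤ))) with hP
  have hjP : j ∈ P := by
    rw [hP, Finset.mem_filter]
    exact ⟨hjS, le_refl j, fun j'' _ h1 h2 => by omega⟩
  have hσdef : sigmaM S j = WithTop.untopD j P.min := rfl
  obtain ⟨hσP, hσmin⟩ := min_untop'_mem hjP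
  rw [← hσdef] at hσP hσmin
  set σ : ℤ := sigmaM S j with hσ
  obtain ⟨hσS, hσj, hσcond⟩ : σ ∈ S ∧ σ ≤ j ∧
      ∀ j'' ∈ S, σ ≤ j'' → j'' < j →
        j - j'' < 2 * ((iotaF S j : ℤ) - (iotaF S j'' : ℤ)) := by
    have := Finset.mem_filter.mp hσP
    exact ⟨this.1, this.2.1, this.2.2⟩
  set m : ℕ := iotaF S j - iotaF S σ with hmdef
  have hm : (m : ℤ) = (iotaF S j : ℤ) - iotaF S σ := by
    have := iotaF_mono S hσj
    push_cast [hmdef]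
    omega
  set l : ℤ := j - 2 * (m : ℤ) - 1 with hldef
  have hτ : tauM S j = l := by
    unfold tauM
    rw [← hσ]
    omega
  have hIcc : Finset.Icc l j = Finset.Icc l (l + 2 * (m : ℤ) + 1) := by
    congr 1
    omega
  have hop : opM S j = symmd S (Finset.Icc l (l + 2 * (m : ℤ) + 1)) := by
    unfold opM itv
    rw [hτ, min_eq_right (by omega), max_eq_left (by omega), hIcc]
  have hσge : l + 1 ≤ σ := by
    rcases eq_or_lt_of_le hσj with heq | hlt
    · omega
    · have := hσcond σ hσS (le_refl σ) hlt
      omega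
  have hnoelem : ∀ x ∈ S, x < σ → x < l := by
    intro x hx hxσ
    by_contra hcon
    push_neg at hcon
    have hxP : x ∈ P := by
      rw [hP, Finset.mem_filter]
      refine ⟨hx, by omega, ?_⟩
      intro j'' hj'' h1 h2
      by_cases hc : σ ≤ j''
      · exact hσcond j'' hj'' hc h2
      · have h3 := iotaF_lt S hσS (show j'' < σ by omega)
        have h4 := iotaF_mono S hσj
        omega
    have := hσmin x hxP
    omega
  have hinter : S ∩ Finset.Icc l j = S ∩ Finset.Icc σ j := by
    ext y
    simp only [Finset.mem_inter, Finset.mem_Icc]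
    constructor
    · rintro ⟨h1, h2, h3⟩
      refine ⟨h1, ?_, h3⟩
      by_contra hcon
      push_neg at hcon
      have := hnoelem y h1 hcon
      omega
    · rintro ⟨h1, h2, h3⟩
      exact ⟨h1, by omega, h3⟩
  have hσm1 : iotaF S σ = iotaF S (σ - 1) + 1 := iotaF_mem S hσS
  have hcard0 : (S ∩ Finset.Icc l j).card = m + 1 := by
    rw [hinter]
    have h5 := iotaF_add S (a := σ) (b := j) (by omega)
    omega
  have hcard : (S ∩ Finset.Icc l (l + 2 * (m : ℤ) + 1)).card = m + 1 := by
    rw [← hIcc]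
    exact hcard0
  have hl : (l - 1) - 2 * (iotaF S (l - 1) : ℤ) = N + 1 := by
    have h5 := iotaF_add S (a := l) (b := j) (by omega)
    rw [hcard0] at h5
    omega
  have hcards := card_symmd S (l := l) hcard
  have hcore := core_sum n i r q N l m S hN hl hcard
  have hιk : iotaF S j ≤ k := hS.1 ▸ iotaF_le_card S j
  have hισ1 : 1 ≤ iotaF S σ := iotaF_pos S hσS
  have hjr : (r : ℤ) < j ∧ j ≤ (n : ℤ) - 1 := hS.2 j hjS
  have hlr : (r : ℤ) < l := by
    have h6 : (1 : ℤ) ≤ (iotaF S σ : ℤ) := by exact_mod_cast hισ1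
    omega
  -- new set in J
  have hmemJ : memJD n r k (opM S j) := by
    constructor
    · rw [hop, hcards, hS.1]
    · intro x hx
      rw [hop] at hx
      rcases mem_symmd.mp hx with ⟨h1, _⟩ | ⟨h1, _⟩
      · exact hS.2 x h1
      · simp only [Finset.mem_Icc] at h1
        omega
  -- invariance of piD
  have hpiD : piD n i r q (opM S j) = piD n i r q S := by
    have hif : (if ((n : ℤ) - 1) ∈ symmd S (Finset.Icc l (l + 2 * (m : ℤ) + 1)) then
        lomega n (n : ℤ) (q ^ ((n : ℤ) + (i : ℤ) - 2 * (r : ℤ)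
            - 2 * (((symmd S (Finset.Icc l (l + 2 * (m : ℤ) + 1))).card : ℤ)) - 1)) -
          lomega n (n : ℤ) (q ^ ((n : ℤ) - (i : ℤ)
            + 2 * (((symmd S (Finset.Icc l (l + 2 * (m : ℤ) + 1))).card : ℤ)) - 1))
       else 0)
        = (if ((n : ℤ) - 1) ∈ S then
        lomega n (n : ℤ) (q ^ ((n : ℤ) + (i : ℤ) - 2 * (r : ℤ) - 2 * ((S.card : ℤ)) - 1)) -
          lomega n (n : ℤ) (q ^ ((n : ℤ) - (i : ℤ) + 2 * ((S.card : ℤ)) - 1))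
       else 0) := by
      by_cases hc : ((n : ℤ) - 1) ∈ Finset.Icc l (l + 2 * (m : ℤ) + 1)
      · -- n - 1 = j, boundary case
        simp only [Finset.mem_Icc] at hc
        have hceq : (n : ℤ) - 1 = j := by omega
        have hinS : ((n : ℤ) - 1) ∈ S := by rw [hceq]; exact hjS
        have hnotS' : ((n : ℤ) - 1) ∉ symmd S (Finset.Icc l (l + 2 * (m : ℤ) + 1)) := by
          rw [mem_symmd]
          rintro (⟨_, h2⟩ | ⟨_, h2⟩)
          · exact h2 (by simp only [Finset.mem_Icc]; omega)
          · exact h2 hinS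
        have h2k : 2 * (k : ℤ) = (i : ℤ) - r := by
          have h6 : (iotaF S j : ℤ) ≤ (k : ℤ) := by exact_mod_cast hιk
          have hk2' : 2 * (k : ℤ) + r ≤ (i : ℤ) := by exact_mod_cast hk2
          omega
        rw [if_neg hnotS', if_pos hinS, hS.1]
        rw [show (n : ℤ) + i - 2 * r - 2 * (k : ℤ) - 1 = (n : ℤ) - i + 2 * (k : ℤ) - 1 by omega]
        exact (sub_self _).symm
      · have hmem : (((n : ℤ) - 1) ∈ symmd S (Finset.Icc l (l + 2 * (m : ℤ) + 1)))
            ↔ (((n : ℤ) - 1) ∈ S) := by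
          rw [mem_symmd]
          constructor
          · rintro (⟨h1, _⟩ | ⟨h1, _⟩)
            · exact h1
            · exact absurd h1 hc
          · intro h1
            exact Or.inl ⟨h1, hc⟩
        by_cases hm1 : ((n : ℤ) - 1) ∈ S
        · rw [if_pos (hmem.mpr hm1), if_pos hm1, hcards]
        · rw [if_neg (fun hcon => hm1 (hmem.mp hcon)), if_neg hm1]
    rw [hop]
    unfold piD
    rw [hcore, hif]
  refine ⟨hmemJ, hpiD, ?_⟩
  -- preservation of suppm for larger elements
  intro j' hj' hjj'
  have hj'mem := Finset.mem_filter.mp hj'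
  have hj'S : j' ∈ S := hj'mem.1
  have hj'ι : 2 * (iotaF S j' : ℤ) = j' - (N + 1) := hj'mem.2
  have hj'S' : j' ∈ opM S j := by
    rw [hop, mem_symmd]
    exact Or.inl ⟨hj'S, by simp only [Finset.mem_Icc]; omega⟩
  have hι' : iotaF (opM S j) j' = iotaF S j' := by
    rw [hop]
    exact iotaF_symmd_ge S hcard (by omega)
  rw [suppm, Finset.mem_filter]
  exact ⟨hj'S', by rw [hι']; omega⟩

end StepM
section Final

lemma applyAll_inv (n i r k : ℕ) (N' : ℤ) (q : ℂ) (f : Finset ℤ → ℤ → Finset ℤ)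
    (step : ∀ S : Finset ℤ, memJD n r k S → ∀ j ∈ suppm N' S,
      memJD n r k (f S j) ∧ piD n i r q (f S j) = piD n i r q S ∧
        ∀ j' ∈ suppm N' S, j < j' → j' ∈ suppm N' (f S j)) :
    ∀ T S : Finset ℤ, memJD n r k S → T ⊆ suppm N' S →
      memJD n r k (applyAll f S T) ∧ piD n i r q (applyAll f S T) = piD n i r q S := by
  intro T
  induction T using Finset.strongInduction with
  | _ T ih =>
    intro S hS hT
    by_cases hne : T.Nonempty
    · rw [applyAll, dif_pos hne]
      have hjT : T.min' hne ∈ T := T.min'_mem hne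
      have hjs : T.min' hne ∈ suppm N' S := hT hjT
      obtain ⟨h1, h2, h3⟩ := step S hS (T.min' hne) hjs
      have herase : T.erase (T.min' hne) ⊆ suppm N' (f S (T.min' hne)) := by
        intro x hx
        obtain ⟨hxne, hxT⟩ := Finset.mem_erase.mp hx
        exact h3 x (hT hxT) (lt_of_le_of_ne (T.min'_le x hxT) (Ne.symm hxne))
      obtain ⟨h4, h5⟩ := ih (T.erase (T.min' hne)) (Finset.erase_ssubset hjT)
        (f S (T.min' hne)) h1 herase
      exact ⟨h4, h5.trans h2⟩
    · rw [applyAll, dif_neg hne]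
      exact ⟨hS, rfl⟩

end Final

/-- type D_n: for `𝐣 ∈ J_{k,r}` (with `N = n-i+r-2`,
`supp⁺ = supp_N`, `supp⁻ = supp_{N+1}`), for every `S ⊆ supp⁺(𝐣)` the partition
`𝐣⁺(S)` lies in `J_{k,r}` and `π_r(𝐣⁺(S)) = π_r(𝐣)`, and for every
`S ⊆ supp⁻(𝐣)` the partition `𝐣⁻(S)` lies in `J_{k,r}` and
`π_r(𝐣⁻(S)) = π_r(𝐣)`. -/
theorem piD_invariant (n i r M k : ℕ) (N : ℤ) (q : ℂ) (hn : 4 ≤ n) (hq : q ≠ 0)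
    (hroot : ∀ m : ℕ, m ≠ 0 → q ^ m ≠ 1) (hi : 1 < i) (hin : i ≤ n - 2)
    (hri : r ≤ i) (hpar : r % 2 = i % 2) (hM : M = (i - r) / 2) (hk : k ≤ M)
    (hN : N = (n : ℤ) - (i : ℤ) + (r : ℤ) - 2)
    (S : Finset ℤ) (hS : memJD n r k S) :
    (∀ T ⊆ suppm N S,
      memJD n r k (applyAll opP S T) ∧
      piD n i r q (applyAll opP S T) = piD n i r q S) ∧
    (∀ T ⊆ suppm (N + 1) S,
      memJD n r k (applyAll opM S T) ∧
      piD n i r q (applyAll opM S T) = piD n i r q S) := by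
  have hin2 : i + 2 ≤ n := by omega
  have hk2 : 2 * k + r ≤ i := by omega
  constructor
  · intro T hT
    exact applyAll_inv n i r k N q opP
      (fun S' hS' j hj => stepP n i r k N q hin2 hk2 hN S' hS' hj) T S hS hT
  · intro T hT
    exact applyAll_inv n i r k (N + 1) q opM
      (fun S' hS' j hj => stepM n i r k N q hin2 hk2 hN S' hS' hj) T S hS hT
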